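/- Let a, b ≥ 0, T > 0 and suppose a continuous nonnegative function φ on (0, 2T) satisfies φ(t) ≤ a(1 + t^{−1/2}) + b ∫_0^t (1 + (t−s)^{−1/2}) φ(s) ds for all t ∈ (0,T), where b(T + 2√T) ≤ 1/2. Then sup_{t∈(0,T)} ∫_0^t (1+(t−s)^{−1/2}) φ(s) ds ≤ 2a(π + 4√T + T), and consequently φ(t) ≤ a(1 + t^{−1/2}) + 2ab(π + 4√T + T) for all t ∈ (0,T). -/

import Mathlib

open MeasureTheory Real Set

namespace S18
noncomputable section

lemma nh_nonneg (x : ℝ) : 0 ≤ x ^ (-(1/2) : ℝ) := by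
  rcases lt_trichotomy x 0 with h|h|h
  · rw [Real.rpow_def_of_neg h, show ((-(1/2)) * π : ℝ) = -(π/2) by ring, Real.cos_neg,
      Real.cos_pi_div_two, mul_zero]
  · simp [h, Real.zero_rpow (by norm_num : (-(1/2) : ℝ) ≠ 0)]
  · exact (Real.rpow_pos_of_pos h _).le

lemma K_nonneg (x : ℝ) : (0:ℝ) ≤ 1 + x ^ (-(1/2) : ℝ) := by
  have := nh_nonneg x; linarith

lemma ii_rpow (c : ℝ) : IntervalIntegrable (fun s : ℝ => s ^ (-(1/2):ℝ)) volume 0 c :=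
  intervalIntegral.intervalIntegrable_rpow' (by norm_num)

lemma int_rpow (c : ℝ) : ∫ s in (0:ℝ)..c, s ^ (-(1/2):ℝ) = 2 * Real.sqrt c := by
  rw [integral_rpow (Or.inl (by norm_num))]
  rw [Real.zero_rpow (by norm_num), Real.sqrt_eq_rpow]
  norm_num
  ring

variable {u t : ℝ}

lemma intOn_one (h : u < t) : IntegrableOn (fun _ : ℝ => (1:ℝ)) (Ioo u t) :=
  integrableOn_const (by rw [Real.volume_Ioo]; exact ENNReal.ofReal_ne_top)

lemma int_one (h : u ≤ t) : ∫ _ in Ioo u t, (1:ℝ) = t - u := by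
  simp [Real.volume_Ioo, ENNReal.toReal_ofReal (by linarith : (0:ℝ) ≤ t - u), h]

lemma intOn_g1 (h : u < t) : IntegrableOn (fun s => (s - u) ^ (-(1/2):ℝ)) (Ioo u t) := by
  have h1 := (ii_rpow (t - u)).comp_sub_right u
  rw [zero_add, sub_add_cancel] at h1
  exact (integrableOn_Ioc_iff_integrableOn_Ioo enorm_ne_top).1
    ((intervalIntegrable_iff_integrableOn_Ioc_of_le h.le).1 h1)

lemma intOn_g2 (h : u < t) : IntegrableOn (fun s => (t - s) ^ (-(1/2):ℝ)) (Ioo u t) := by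
  have h1 := ((ii_rpow (t - u)).comp_sub_left t).symm
  rw [sub_sub_cancel, sub_zero] at h1
  exact (integrableOn_Ioc_iff_integrableOn_Ioo enorm_ne_top).1
    ((intervalIntegrable_iff_integrableOn_Ioc_of_le h.le).1 h1)

lemma int_g1 (h : u < t) : ∫ s in Ioo u t, (s - u) ^ (-(1/2):ℝ) = 2 * Real.sqrt (t - u) := by
  rw [← MeasureTheory.integral_Ioc_eq_integral_Ioo, ← intervalIntegral.integral_of_le h.le,
    intervalIntegral.integral_comp_sub_right (fun x => x ^ (-(1/2):ℝ)) u, sub_self, int_rpow]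

lemma int_g2 (h : u < t) : ∫ s in Ioo u t, (t - s) ^ (-(1/2):ℝ) = 2 * Real.sqrt (t - u) := by
  rw [← MeasureTheory.integral_Ioc_eq_integral_Ioo, ← intervalIntegral.integral_of_le h.le,
    intervalIntegral.integral_comp_sub_left (fun x => x ^ (-(1/2):ℝ)) t, sub_self, int_rpow]

lemma beta_complex : Complex.betaIntegral (1/2) (1/2) = (π : ℂ) := by
  have h := Complex.Gamma_mul_Gamma_eq_betaIntegral (s := 1/2) (t := 1/2)
    (by norm_num) (by norm_num)
  rw [show (1/2 + 1/2 : ℂ) = 1 by norm_num, Complex.Gamma_one, one_mul] at h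
  rw [← h, Complex.Gamma_one_half_eq, ← Complex.cpow_add _ _ (by
    exact_mod_cast Complex.ofReal_ne_zero.mpr Real.pi_ne_zero)]
  norm_num

lemma beta_real {c : ℝ} (hc : 0 < c) :
    ∫ x in (0:ℝ)..c, x ^ (-(1/2):ℝ) * (c - x) ^ (-(1/2):ℝ) = π := by
  have key : EqOn (fun x : ℝ => ((x ^ (-(1/2):ℝ) * (c - x) ^ (-(1/2):ℝ) : ℝ) : ℂ))
      (fun x : ℝ => (x:ℂ) ^ ((1/2 : ℂ) - 1) * ((c:ℂ) - (x:ℂ)) ^ ((1/2 : ℂ) - 1))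
      (uIcc (0:ℝ) c) := by
    intro x hx
    rw [uIcc_of_le hc.le] at hx
    have hx0 : (0:ℝ) ≤ x := hx.1
    have hx1 : (0:ℝ) ≤ c - x := by linarith [hx.2]
    have e1 := Complex.ofReal_cpow hx0 (-(1/2))
    have e2 := Complex.ofReal_cpow hx1 (-(1/2))
    push_cast at e1 e2 ⊢
    rw [e1, e2]
    norm_num
  have hscaled := Complex.betaIntegral_scaled (1/2) (1/2) hc
  rw [show (1/2 + 1/2 - 1 : ℂ) = 0 by norm_num, Complex.cpow_zero, one_mul,
    beta_complex] at hscaled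
  have : ((∫ x in (0:ℝ)..c, x ^ (-(1/2):ℝ) * (c - x) ^ (-(1/2):ℝ) : ℝ) : ℂ) = (π : ℂ) := by
    rw [← intervalIntegral.integral_ofReal, intervalIntegral.integral_congr key]
    exact hscaled
  exact_mod_cast this

lemma int_beta (h : u < t) :
    ∫ s in Ioo u t, (t - s) ^ (-(1/2):ℝ) * (s - u) ^ (-(1/2):ℝ) = π := by
  rw [← MeasureTheory.integral_Ioc_eq_integral_Ioo, ← intervalIntegral.integral_of_le h.le]
  have h2 := intervalIntegral.integral_comp_sub_right
    (a := u) (b := t) (fun x => x ^ (-(1/2):ℝ) * ((t - u) - x) ^ (-(1/2):ℝ)) u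
  simp only [sub_self] at h2
  have h3 : (∫ x in u..t, (x - u) ^ (-(1/2):ℝ) * ((t - u) - (x - u)) ^ (-(1/2):ℝ))
      = ∫ x in u..t, (t - x) ^ (-(1/2):ℝ) * (x - u) ^ (-(1/2):ℝ) := by
    apply intervalIntegral.integral_congr
    intro x _
    dsimp only
    have : (t - u) - (x - u) = t - x := by ring
    rw [this, mul_comm]
  rw [← h3, h2]
  exact beta_real (by linarith)

lemma meas_beta : Measurable (fun s : ℝ => (t - s) ^ (-(1/2):ℝ) * (s - u) ^ (-(1/2):ℝ)) :=
  ((measurable_const.sub measurable_id).pow measurable_const).mul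
    ((measurable_id.sub measurable_const).pow measurable_const)

lemma intOn_beta (h : u < t) :
    IntegrableOn (fun s => (t - s) ^ (-(1/2):ℝ) * (s - u) ^ (-(1/2):ℝ)) (Ioo u t) := by
  set c := ((t - u)/2) ^ (-(1/2):ℝ) with hc
  have hc0 : 0 ≤ c := nh_nonneg _
  have hg : IntegrableOn
      (fun s => c * (s - u) ^ (-(1/2):ℝ) + c * (t - s) ^ (-(1/2):ℝ)) (Ioo u t) :=
    ((intOn_g1 h).const_mul c).add ((intOn_g2 h).const_mul c)
  refine Integrable.mono' hg meas_beta.aestronglyMeasurable ?_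
  filter_upwards [ae_restrict_mem measurableSet_Ioo] with s hs
  have h1 : (0:ℝ) < s - u := by linarith [hs.1]
  have h2 : (0:ℝ) < t - s := by linarith [hs.2]
  have hnorm : ‖(t - s) ^ (-(1/2):ℝ) * (s - u) ^ (-(1/2):ℝ)‖
      = (t - s) ^ (-(1/2):ℝ) * (s - u) ^ (-(1/2):ℝ) :=
    Real.norm_of_nonneg (mul_nonneg (nh_nonneg _) (nh_nonneg _))
  rw [hnorm]
  rcases le_or_gt s ((u + t)/2) with hm | hm
  · have hb : (t - s) ^ (-(1/2):ℝ) ≤ c :=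
      Real.rpow_le_rpow_of_nonpos (by linarith) (by linarith) (by norm_num)
    have h4 : (t - s) ^ (-(1/2):ℝ) * (s - u) ^ (-(1/2):ℝ) ≤ c * (s - u) ^ (-(1/2):ℝ) :=
      mul_le_mul_of_nonneg_right hb (nh_nonneg _)
    have h3 : 0 ≤ c * (t - s) ^ (-(1/2):ℝ) := mul_nonneg hc0 (nh_nonneg _)
    linarith
  · have hb : (s - u) ^ (-(1/2):ℝ) ≤ c :=
      Real.rpow_le_rpow_of_nonpos (by linarith) (by linarith) (by norm_num)
    have h4 : (t - s) ^ (-(1/2):ℝ) * (s - u) ^ (-(1/2):ℝ) ≤ (t - s) ^ (-(1/2):ℝ) * c :=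
      mul_le_mul_of_nonneg_left hb (nh_nonneg _)
    have h3 : 0 ≤ c * (s - u) ^ (-(1/2):ℝ) := mul_nonneg hc0 (nh_nonneg _)
    nlinarith

lemma intOn_K (h : u < t) :
    IntegrableOn (fun s => 1 + (t - s) ^ (-(1/2):ℝ)) (Ioo u t) :=
  (intOn_one h).add (intOn_g2 h)

lemma int_K (h : u < t) :
    ∫ s in Ioo u t, (1 + (t - s) ^ (-(1/2):ℝ)) = (t - u) + 2 * Real.sqrt (t - u) := by
  have e1 := integral_add (μ := volume.restrict (Ioo u t)) (f := fun _ => (1:ℝ))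
    (g := fun s => (t - s) ^ (-(1/2):ℝ)) (intOn_one h) (intOn_g2 h)
  rw [e1, int_one h.le, int_g2 h]

lemma intOn_KK (h : u < t) :
    IntegrableOn (fun s => (1 + (t - s) ^ (-(1/2):ℝ)) * (1 + (s - u) ^ (-(1/2):ℝ)))
      (Ioo u t) := by
  have hfun : (fun s => (1 + (t - s) ^ (-(1/2):ℝ)) * (1 + (s - u) ^ (-(1/2):ℝ)))
      = fun s : ℝ => (1 : ℝ) + (s - u) ^ (-(1/2):ℝ) + ((t - s) ^ (-(1/2):ℝ)
        + (t - s) ^ (-(1/2):ℝ) * (s - u) ^ (-(1/2):ℝ)) := by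
    funext s; ring
  rw [hfun]
  exact ((intOn_one h).add (intOn_g1 h)).add ((intOn_g2 h).add (intOn_beta h))

lemma int_KK (h : u < t) :
    ∫ s in Ioo u t, (1 + (t - s) ^ (-(1/2):ℝ)) * (1 + (s - u) ^ (-(1/2):ℝ))
      = (t - u) + 4 * Real.sqrt (t - u) + π := by
  have hfun : (fun s => (1 + (t - s) ^ (-(1/2):ℝ)) * (1 + (s - u) ^ (-(1/2):ℝ)))
      = fun s : ℝ => ((1 : ℝ) + (s - u) ^ (-(1/2):ℝ)) + ((t - s) ^ (-(1/2):ℝ)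
        + (t - s) ^ (-(1/2):ℝ) * (s - u) ^ (-(1/2):ℝ)) := by
    funext s; ring
  have h12 : IntegrableOn (fun s : ℝ => (1:ℝ) + (s - u) ^ (-(1/2):ℝ)) (Ioo u t) :=
    (intOn_one h).add (intOn_g1 h)
  have h34 : IntegrableOn (fun s : ℝ => (t - s) ^ (-(1/2):ℝ)
      + (t - s) ^ (-(1/2):ℝ) * (s - u) ^ (-(1/2):ℝ)) (Ioo u t) :=
    (intOn_g2 h).add (intOn_beta h)
  have eA := integral_add (μ := volume.restrict (Ioo u t)) h12 h34
  have eB := integral_add (μ := volume.restrict (Ioo u t)) (f := fun _ => (1:ℝ))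
    (g := fun s => (s - u) ^ (-(1/2):ℝ)) (intOn_one h) (intOn_g1 h)
  have eC := integral_add (μ := volume.restrict (Ioo u t))
    (f := fun s => (t - s) ^ (-(1/2):ℝ))
    (g := fun s => (t - s) ^ (-(1/2):ℝ) * (s - u) ^ (-(1/2):ℝ)) (intOn_g2 h) (intOn_beta h)
  rw [hfun, eA, eB, eC, int_one h.le, int_g1 h, int_g2 h, int_beta h]
  ring

lemma int_KK0 {t : ℝ} (h : 0 < t) :
    ∫ s in Ioo (0:ℝ) t, (1 + (t - s) ^ (-(1/2):ℝ)) * (1 + s ^ (-(1/2):ℝ))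
      = t + 4 * Real.sqrt t + π := by
  have := int_KK (u := 0) h
  simpa using this

lemma intOn_KK0 {t : ℝ} (h : 0 < t) :
    IntegrableOn (fun s => (1 + (t - s) ^ (-(1/2):ℝ)) * (1 + s ^ (-(1/2):ℝ)))
      (Ioo (0:ℝ) t) := by
  have := intOn_KK (u := 0) h
  simpa using this

lemma int_K0 {t : ℝ} (h : 0 < t) :
    ∫ s in Ioo (0:ℝ) t, (1 + (t - s) ^ (-(1/2):ℝ)) = t + 2 * Real.sqrt t := by
  have := int_K (u := 0) h
  simpa using this

end
end S18

open Set S18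
open scoped ENNReal

set_option maxHeartbeats 1000000 in
/-- singular Gronwall-type bootstrap. -/
theorem stmt18 (a b T : ℝ) (ha : 0 ≤ a) (hb : 0 ≤ b) (hT : 0 < T)
    (φ : ℝ → ℝ) (hφ_cont : ContinuousOn φ (Set.Ioo 0 (2 * T)))
    (hφ_nonneg : ∀ t ∈ Set.Ioo (0 : ℝ) (2 * T), 0 ≤ φ t)
    (hint : ∀ t ∈ Set.Ioo (0 : ℝ) T,
      IntegrableOn (fun s => (1 + (t - s) ^ (-(1 / 2) : ℝ)) * φ s) (Set.Ioo 0 t))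
    (hineq : ∀ t ∈ Set.Ioo (0 : ℝ) T,
      φ t ≤ a * (1 + t ^ (-(1 / 2) : ℝ)) +
        b * ∫ s in Set.Ioo (0 : ℝ) t, (1 + (t - s) ^ (-(1 / 2) : ℝ)) * φ s)
    (hsmall : b * (T + 2 * Real.sqrt T) ≤ 1 / 2) :
    (∀ t ∈ Set.Ioo (0 : ℝ) T,
      (∫ s in Set.Ioo (0 : ℝ) t, (1 + (t - s) ^ (-(1 / 2) : ℝ)) * φ s) ≤
        2 * a * (π + 4 * Real.sqrt T + T)) ∧
    (∀ t ∈ Set.Ioo (0 : ℝ) T,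
      φ t ≤ a * (1 + t ^ (-(1 / 2) : ℝ)) + 2 * a * b * (π + 4 * Real.sqrt T + T)) := by
  classical
  have h2T : T < 2 * T := by linarith
  set C : ℝ := π + 4 * Real.sqrt T + T with hC
  clear_value C
  have hπ : (0:ℝ) < π := Real.pi_pos
  have hsT : 0 ≤ Real.sqrt T := Real.sqrt_nonneg T
  have hC0 : 0 < C := by rw [hC]; positivity
  set ψ : ℝ → ℝ := fun x => if hx : x ∈ Set.Ioo (0:ℝ) (2*T) then φ x else 0 with hψdef
  clear_value ψ
  have hψm : Measurable ψ := by
    rw [hψdef]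
    refine Measurable.dite (s := Set.Ioo (0:ℝ) (2*T)) (f := (Set.Ioo (0:ℝ) (2*T)).restrict φ)
      ?_ measurable_const measurableSet_Ioo
    exact (ContinuousOn.restrict hφ_cont).measurable
  have hψeq : ∀ ⦃x⦄, x ∈ Set.Ioo (0:ℝ) (2*T) → ψ x = φ x := by
    intro x hx; rw [hψdef]; exact dif_pos hx
  have hsub2 : Set.Ioo (0:ℝ) T ⊆ Set.Ioo 0 (2*T) := Set.Ioo_subset_Ioo le_rfl h2T.le
  have hcb1 : ∀ {x : ℝ}, 0 < x → x ≤ T → x + 4 * Real.sqrt x + π ≤ C := by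
    intro x h0 h1
    have := Real.sqrt_le_sqrt h1
    rw [hC]; linarith
  have hcb2 : ∀ {x : ℝ}, 0 < x → x ≤ T → x + 2 * Real.sqrt x ≤ T + 2 * Real.sqrt T := by
    intro x h0 h1; have := Real.sqrt_le_sqrt h1; linarith
  have hT2 : T/2 ∈ Set.Ioo (0:ℝ) T := ⟨by linarith, by linarith⟩
  -- φ is integrable on (0, T)
  have hφint1 : IntegrableOn φ (Set.Ioo 0 (T/2)) := by
    refine Integrable.mono' (hint _ hT2)
      ((hφ_cont.mono (Set.Ioo_subset_Ioo le_rfl (by linarith))).aestronglyMeasurable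
        measurableSet_Ioo) ?_
    filter_upwards [ae_restrict_mem measurableSet_Ioo] with s hs
    have hsnn : 0 ≤ φ s := hφ_nonneg s (Set.Ioo_subset_Ioo le_rfl (by linarith) hs)
    rw [Real.norm_of_nonneg hsnn]
    nlinarith [nh_nonneg (T/2 - s)]
  have hφint2 : IntegrableOn φ (Set.Icc (T/2) T) :=
    (hφ_cont.mono (fun x hx => ⟨by linarith [hx.1], by linarith [hx.2]⟩)).integrableOn_Icc
  have hφintT : IntegrableOn φ (Set.Ioo 0 T) := by
    refine (hφint1.union hφint2).mono_set ?_
    intro x hx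
    rcases le_or_gt (T/2) x with h|h
    · exact Or.inr ⟨h, hx.2.le⟩
    · exact Or.inl ⟨hx.1, h⟩
  set A : ℝ := ∫ s in Set.Ioo (0:ℝ) T, φ s with hAdef
  clear_value A
  have hA0 : 0 ≤ A := by
    rw [hAdef]
    exact setIntegral_nonneg measurableSet_Ioo (fun x hx => hφ_nonneg x (hsub2 hx))
  have hAmono : ∀ ⦃r⦄, r ∈ Set.Ioo (0:ℝ) T → (∫ s in Set.Ioo (0:ℝ) r, φ s) ≤ A := by
    intro r hr
    rw [hAdef]
    refine setIntegral_mono_set hφintT ?_ ?_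
    · filter_upwards [ae_restrict_mem measurableSet_Ioo] with x hx
      exact hφ_nonneg x (hsub2 hx)
    · exact HasSubset.Subset.eventuallyLE (Set.Ioo_subset_Ioo le_rfl hr.2.le)
  -- the key quantity
  set F : ℝ → ℝ := fun r => ∫ s in Set.Ioo (0:ℝ) r, (1 + (r - s) ^ (-(1 / 2) : ℝ)) * φ s
    with hFdef
  clear_value F
  have hFnn : ∀ ⦃r⦄, r ∈ Set.Ioo (0:ℝ) T → 0 ≤ F r := by
    intro r hr
    rw [hFdef]
    refine setIntegral_nonneg measurableSet_Ioo (fun s hs => ?_)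
    exact mul_nonneg (K_nonneg _) (hφ_nonneg s (hsub2 ⟨hs.1, hs.2.trans hr.2⟩))
  -- lintegral representation
  have hFJ : ∀ ⦃r⦄, r ∈ Set.Ioo (0:ℝ) T → ENNReal.ofReal (F r)
      = ∫⁻ s in Set.Ioo (0:ℝ) r, ENNReal.ofReal ((1 + (r - s) ^ (-(1 / 2) : ℝ)) * ψ s) := by
    intro r hr
    rw [hFdef]
    rw [MeasureTheory.ofReal_integral_eq_lintegral_ofReal (hint r hr) ?_]
    · apply lintegral_congr_ae
      filter_upwards [ae_restrict_mem measurableSet_Ioo] with s hs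
      rw [hψeq (hsub2 ⟨hs.1, hs.2.trans hr.2⟩)]
    · filter_upwards [ae_restrict_mem measurableSet_Ioo] with s hs
      exact mul_nonneg (K_nonneg _) (hφ_nonneg s (hsub2 ⟨hs.1, hs.2.trans hr.2⟩))
  have hFB : ∀ ⦃r⦄, r ∈ Set.Ioo (0:ℝ) T → F r ≤ a * C + b * (C * A) := by
    intro r hr
    obtain ⟨hr0, hrT⟩ := hr
    have hψA : ∫⁻ v in Set.Ioo (0:ℝ) r, ENNReal.ofReal (ψ v) ≤ ENNReal.ofReal A := by
      have hψint : IntegrableOn ψ (Set.Ioo 0 r) := by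
        refine (hφintT.mono_set (Set.Ioo_subset_Ioo le_rfl hrT.le)).congr_fun ?_
          measurableSet_Ioo
        intro x hx; exact (hψeq (hsub2 ⟨hx.1, hx.2.trans hrT⟩)).symm
      rw [← MeasureTheory.ofReal_integral_eq_lintegral_ofReal hψint ?_]
      · apply ENNReal.ofReal_le_ofReal
        rw [setIntegral_congr_fun measurableSet_Ioo
          (fun x hx => hψeq (hsub2 ⟨hx.1, hx.2.trans hrT⟩))]
        exact hAmono ⟨hr0, hrT⟩
      · filter_upwards [ae_restrict_mem measurableSet_Ioo] with x hx
        rw [hψeq (hsub2 ⟨hx.1, hx.2.trans hrT⟩)]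
        exact hφ_nonneg x (hsub2 ⟨hx.1, hx.2.trans hrT⟩)
    set E : ℝ → ℝ → ℝ≥0∞ := fun s v =>
      ENNReal.ofReal (1 + (r - s) ^ (-(1/2):ℝ)) * ENNReal.ofReal (1 + (s - v) ^ (-(1/2):ℝ))
        * ENNReal.ofReal (ψ v) with hE
    set G : ℝ → ℝ → ℝ≥0∞ := fun s => (Set.Ioo (0:ℝ) s).indicator (E s) with hG
    have hGm : Measurable (Function.uncurry G) := by
      have hset : MeasurableSet {p : ℝ × ℝ | 0 < p.2 ∧ p.2 < p.1} :=
        (measurableSet_lt measurable_const measurable_snd).inter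
          (measurableSet_lt measurable_snd measurable_fst)
      have hEm : Measurable (fun p : ℝ × ℝ => E p.1 p.2) := by
        rw [hE]
        exact ((ENNReal.measurable_ofReal.comp
            (measurable_const.add ((measurable_const.sub measurable_fst).pow measurable_const))).mul
          (ENNReal.measurable_ofReal.comp
            (measurable_const.add ((measurable_fst.sub measurable_snd).pow measurable_const)))).mul
          (ENNReal.measurable_ofReal.comp (hψm.comp measurable_snd))
      have huncurry : Function.uncurry G = {p : ℝ × ℝ | 0 < p.2 ∧ p.2 < p.1}.indicator
          (fun p => E p.1 p.2) := by
        funext p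
        rcases p with ⟨s, v⟩
        simp only [Function.uncurry, hG, Set.indicator_apply, Set.mem_Ioo, Set.mem_setOf_eq]
      rw [huncurry]
      exact hEm.indicator hset
    have hdom : ∀ s : ℝ, s ∈ Set.Ioo (0:ℝ) r → ∀ H : ℝ → ℝ≥0∞,
        ∫⁻ v in Set.Ioo (0:ℝ) s, H v
          = ∫⁻ v in Set.Ioo (0:ℝ) r, (Set.Ioo (0:ℝ) s).indicator H v := by
      intro s hs H
      rw [lintegral_indicator measurableSet_Ioo,
        Measure.restrict_restrict measurableSet_Ioo,
        Set.inter_eq_left.mpr (Set.Ioo_subset_Ioo le_rfl hs.2.le)]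
    have hKKanr : IntegrableOn (fun s : ℝ =>
        a * ((1 + (r - s) ^ (-(1/2):ℝ)) * (1 + s ^ (-(1/2):ℝ)))) (Set.Ioo 0 r) :=
      (intOn_KK0 hr0).const_mul a
    have hfirst : (∫⁻ s in Set.Ioo (0:ℝ) r,
        ENNReal.ofReal (a * ((1 + (r - s) ^ (-(1/2):ℝ)) * (1 + s ^ (-(1/2):ℝ)))))
        ≤ ENNReal.ofReal (a * C) := by
      rw [← MeasureTheory.ofReal_integral_eq_lintegral_ofReal hKKanr
        (ae_of_all _ (fun s => mul_nonneg ha (mul_nonneg (K_nonneg _) (K_nonneg _))))]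
      apply ENNReal.ofReal_le_ofReal
      rw [MeasureTheory.integral_const_mul, int_KK0 hr0]
      exact mul_le_mul_of_nonneg_left (hcb1 hr0 hrT.le) ha
    have hsecond : (∫⁻ s in Set.Ioo (0:ℝ) r, ENNReal.ofReal b
        * (ENNReal.ofReal (1 + (r - s) ^ (-(1/2):ℝ))
          * ∫⁻ v in Set.Ioo (0:ℝ) s, ENNReal.ofReal ((1 + (s - v) ^ (-(1/2):ℝ)) * ψ v)))
        ≤ ENNReal.ofReal b * (ENNReal.ofReal C * ENNReal.ofReal A) := by
      rw [lintegral_const_mul' (ENNReal.ofReal b) _ ENNReal.ofReal_ne_top]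
      refine mul_le_mul_right ?_ _
      calc (∫⁻ s in Set.Ioo (0:ℝ) r, ENNReal.ofReal (1 + (r - s) ^ (-(1/2):ℝ))
              * ∫⁻ v in Set.Ioo (0:ℝ) s, ENNReal.ofReal ((1 + (s - v) ^ (-(1/2):ℝ)) * ψ v))
          = ∫⁻ s in Set.Ioo (0:ℝ) r, ∫⁻ v in Set.Ioo (0:ℝ) r, G s v := by
            apply lintegral_congr_ae
            filter_upwards [ae_restrict_mem measurableSet_Ioo] with s hs
            rw [← lintegral_const_mul' _ _ ENNReal.ofReal_ne_top]
            have h9 : ∀ v : ℝ, ENNReal.ofReal (1 + (r - s) ^ (-(1/2):ℝ))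
                * ENNReal.ofReal ((1 + (s - v) ^ (-(1/2):ℝ)) * ψ v) = E s v := by
              intro v
              rw [hE]
              rw [ENNReal.ofReal_mul (K_nonneg (s - v)), ← mul_assoc]
            rw [lintegral_congr h9, hdom s hs (E s)]
        _ = ∫⁻ v in Set.Ioo (0:ℝ) r, ∫⁻ s in Set.Ioo (0:ℝ) r, G s v :=
            lintegral_lintegral_swap hGm.aemeasurable
        _ ≤ ∫⁻ v in Set.Ioo (0:ℝ) r, ENNReal.ofReal C * ENNReal.ofReal (ψ v) := by
            apply lintegral_mono_ae
            filter_upwards [ae_restrict_mem measurableSet_Ioo] with v hv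
            have hv0 : (0:ℝ) < v := hv.1
            have e0 : ∀ s : ℝ, G s v = (Set.Ioi v).indicator
                (fun s' => ENNReal.ofReal (1 + (r - s') ^ (-(1/2):ℝ))
                  * ENNReal.ofReal (1 + (s' - v) ^ (-(1/2):ℝ)) * ENNReal.ofReal (ψ v)) s := by
              intro s
              simp only [hG, hE, Set.indicator_apply, Set.mem_Ioo, Set.mem_Ioi]
              by_cases hsv : v < s
              · simp [hsv, hv0]
              · simp [hsv]
            rw [lintegral_congr e0, lintegral_indicator measurableSet_Ioi,
              Measure.restrict_restrict measurableSet_Ioi]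
            have hIoi : Set.Ioi v ∩ Set.Ioo 0 r = Set.Ioo v r := by
              ext x
              constructor
              · rintro ⟨h1, h2⟩; exact ⟨h1, h2.2⟩
              · rintro ⟨h1, h2⟩; exact ⟨h1, lt_trans hv0 h1, h2⟩
            rw [hIoi]
            rw [lintegral_mul_const' (ENNReal.ofReal (ψ v)) _ ENNReal.ofReal_ne_top]
            refine mul_le_mul_left ?_ _
            have h10 : ∀ s : ℝ, ENNReal.ofReal (1 + (r - s) ^ (-(1/2):ℝ))
                * ENNReal.ofReal (1 + (s - v) ^ (-(1/2):ℝ))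
                = ENNReal.ofReal ((1 + (r - s) ^ (-(1/2):ℝ)) * (1 + (s - v) ^ (-(1/2):ℝ))) :=
              fun s => (ENNReal.ofReal_mul (K_nonneg (r - s))).symm
            rw [lintegral_congr h10,
              ← MeasureTheory.ofReal_integral_eq_lintegral_ofReal (intOn_KK hv.2)
                (ae_of_all _ (fun s => mul_nonneg (K_nonneg _) (K_nonneg _)))]
            apply ENNReal.ofReal_le_ofReal
            rw [int_KK hv.2]
            exact hcb1 (by linarith [hv.1, hv.2]) (by linarith [hv.1, hv.2])
        _ = ENNReal.ofReal C * ∫⁻ v in Set.Ioo (0:ℝ) r, ENNReal.ofReal (ψ v) :=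
            lintegral_const_mul' _ _ ENNReal.ofReal_ne_top
        _ ≤ ENNReal.ofReal C * ENNReal.ofReal A := mul_le_mul_right hψA _
    have key : ENNReal.ofReal (F r) ≤ ENNReal.ofReal (a * C)
        + ENNReal.ofReal b * (ENNReal.ofReal C * ENNReal.ofReal A) := by
      calc ENNReal.ofReal (F r)
          = ∫⁻ s in Set.Ioo (0:ℝ) r, ENNReal.ofReal ((1 + (r - s) ^ (-(1/2):ℝ)) * ψ s) :=
            hFJ ⟨hr0, hrT⟩
        _ ≤ ∫⁻ s in Set.Ioo (0:ℝ) r,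
            (ENNReal.ofReal (a * ((1 + (r - s) ^ (-(1/2):ℝ)) * (1 + s ^ (-(1/2):ℝ))))
              + ENNReal.ofReal b * (ENNReal.ofReal (1 + (r - s) ^ (-(1/2):ℝ))
                * ∫⁻ v in Set.Ioo (0:ℝ) s,
                    ENNReal.ofReal ((1 + (s - v) ^ (-(1/2):ℝ)) * ψ v))) := by
            apply lintegral_mono_ae
            filter_upwards [ae_restrict_mem measurableSet_Ioo] with s hs
            have hsT' : s ∈ Set.Ioo (0:ℝ) T := ⟨hs.1, hs.2.trans hrT⟩
            have h3 : ψ s = φ s := hψeq (hsub2 hsT')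
            have h2 : φ s ≤ a * (1 + s ^ (-(1/2):ℝ)) + b * F s := by
              rw [hFdef]; exact hineq s hsT'
            calc ENNReal.ofReal ((1 + (r - s) ^ (-(1/2):ℝ)) * ψ s)
                ≤ ENNReal.ofReal (a * ((1 + (r - s) ^ (-(1/2):ℝ)) * (1 + s ^ (-(1/2):ℝ)))
                  + b * ((1 + (r - s) ^ (-(1/2):ℝ)) * F s)) := by
                  apply ENNReal.ofReal_le_ofReal
                  rw [h3]
                  nlinarith [mul_le_mul_of_nonneg_left h2 (K_nonneg (r - s)), K_nonneg (r - s)]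
              _ ≤ ENNReal.ofReal (a * ((1 + (r - s) ^ (-(1/2):ℝ)) * (1 + s ^ (-(1/2):ℝ))))
                  + ENNReal.ofReal (b * ((1 + (r - s) ^ (-(1/2):ℝ)) * F s)) :=
                  ENNReal.ofReal_add_le
              _ = ENNReal.ofReal (a * ((1 + (r - s) ^ (-(1/2):ℝ)) * (1 + s ^ (-(1/2):ℝ))))
                  + ENNReal.ofReal b * (ENNReal.ofReal (1 + (r - s) ^ (-(1/2):ℝ))
                    * ENNReal.ofReal (F s)) := by
                  rw [ENNReal.ofReal_mul hb, ENNReal.ofReal_mul (K_nonneg (r - s))]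
              _ = _ := by rw [hFJ hsT']
        _ = (∫⁻ s in Set.Ioo (0:ℝ) r,
              ENNReal.ofReal (a * ((1 + (r - s) ^ (-(1/2):ℝ)) * (1 + s ^ (-(1/2):ℝ)))))
            + ∫⁻ s in Set.Ioo (0:ℝ) r, ENNReal.ofReal b
                * (ENNReal.ofReal (1 + (r - s) ^ (-(1/2):ℝ))
                  * ∫⁻ v in Set.Ioo (0:ℝ) s,
                      ENNReal.ofReal ((1 + (s - v) ^ (-(1/2):ℝ)) * ψ v)) := by
            apply lintegral_add_left
            exact ENNReal.measurable_ofReal.comp (measurable_const.mul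
              ((measurable_const.add
                ((measurable_const.sub measurable_id).pow measurable_const)).mul
               (measurable_const.add (measurable_id.pow measurable_const))))
        _ ≤ _ := add_le_add hfirst hsecond
    have hRnn : 0 ≤ a * C + b * (C * A) :=
      add_nonneg (mul_nonneg ha hC0.le) (mul_nonneg hb (mul_nonneg hC0.le hA0))
    have hcomb : ENNReal.ofReal (a * C)
        + ENNReal.ofReal b * (ENNReal.ofReal C * ENNReal.ofReal A)
        = ENNReal.ofReal (a * C + b * (C * A)) := by
      rw [← ENNReal.ofReal_mul hC0.le, ← ENNReal.ofReal_mul hb,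
        ← ENNReal.ofReal_add (mul_nonneg ha hC0.le) (mul_nonneg hb (mul_nonneg hC0.le hA0))]
    exact (ENNReal.ofReal_le_ofReal_iff hRnn).1 (key.trans_eq hcomb)
  -- the sup
  set SI : Set ℝ := F '' Set.Ioo 0 T with hSI
  clear_value SI
  have hne : SI.Nonempty := by rw [hSI]; exact ⟨F (T/2), ⟨T/2, hT2, rfl⟩⟩
  have hbdd : BddAbove SI := by
    refine ⟨a * C + b * (C * A), ?_⟩
    rw [hSI]
    rintro x ⟨r, hr, rfl⟩
    exact hFB hr
  set M : ℝ := sSup SI with hM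
  clear_value M
  have hFM : ∀ ⦃r⦄, r ∈ Set.Ioo (0:ℝ) T → F r ≤ M := by
    intro r hr
    rw [hM]
    exact le_csSup hbdd (by rw [hSI]; exact ⟨r, hr, rfl⟩)
  have hM0 : 0 ≤ M := le_trans (hFnn hT2) (hFM hT2)
  -- the bootstrap step
  have hstep : ∀ ⦃r⦄, r ∈ Set.Ioo (0:ℝ) T → F r ≤ a * C + M / 2 := by
    intro r hr
    obtain ⟨hr0, hrT⟩ := hr
    have hKKa : IntegrableOn
        (fun s : ℝ => a * ((1 + (r - s) ^ (-(1/2):ℝ)) * (1 + s ^ (-(1/2):ℝ))))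
        (Set.Ioo 0 r) := (intOn_KK0 hr0).const_mul a
    have hKbm : IntegrableOn
        (fun s : ℝ => (b * M) * (1 + (r - s) ^ (-(1/2):ℝ))) (Set.Ioo 0 r) :=
      (intOn_K (u := 0) hr0).const_mul (b * M)
    have hle : F r ≤ ∫ s in Set.Ioo (0:ℝ) r,
        (a * ((1 + (r - s) ^ (-(1/2):ℝ)) * (1 + s ^ (-(1/2):ℝ)))
          + (b * M) * (1 + (r - s) ^ (-(1/2):ℝ))) := by
      rw [hFdef]
      refine setIntegral_mono_on (hint r ⟨hr0, hrT⟩) (hKKa.add hKbm) measurableSet_Ioo ?_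
      intro s hs
      have hsT' : s ∈ Set.Ioo (0:ℝ) T := ⟨hs.1, hs.2.trans hrT⟩
      have h2 : φ s ≤ a * (1 + s ^ (-(1/2):ℝ)) + b * F s := by
        rw [hFdef]; exact hineq s hsT'
      have h4 : F s ≤ M := hFM hsT'
      have h5 := mul_le_mul_of_nonneg_left h2 (K_nonneg (r - s))
      have h6 : b * F s ≤ b * M := mul_le_mul_of_nonneg_left h4 hb
      nlinarith [K_nonneg (r - s), mul_le_mul_of_nonneg_left h6 (K_nonneg (r - s))]
    have hval : (∫ s in Set.Ioo (0:ℝ) r,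
        (a * ((1 + (r - s) ^ (-(1/2):ℝ)) * (1 + s ^ (-(1/2):ℝ)))
          + (b * M) * (1 + (r - s) ^ (-(1/2):ℝ))))
        = a * (r + 4 * Real.sqrt r + π) + (b * M) * (r + 2 * Real.sqrt r) := by
      have eD := integral_add (μ := volume.restrict (Set.Ioo 0 r)) hKKa hKbm
      rw [eD, MeasureTheory.integral_const_mul, MeasureTheory.integral_const_mul,
        int_KK0 hr0, int_K0 hr0]
    have hb1 : a * (r + 4 * Real.sqrt r + π) ≤ a * C :=
      mul_le_mul_of_nonneg_left (hcb1 hr0 hrT.le) ha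
    have hb2 : (b * M) * (r + 2 * Real.sqrt r) ≤ (b * M) * (T + 2 * Real.sqrt T) :=
      mul_le_mul_of_nonneg_left (hcb2 hr0 hrT.le) (mul_nonneg hb hM0)
    have hb3 : M * (b * (T + 2 * Real.sqrt T)) ≤ M * (1/2) :=
      mul_le_mul_of_nonneg_left hsmall hM0
    have hb4 : (b * M) * (T + 2 * Real.sqrt T) = M * (b * (T + 2 * Real.sqrt T)) := by ring
    rw [hval] at hle
    linarith
  have hMle : M ≤ a * C + M / 2 := by
    rw [hM]
    refine csSup_le hne ?_
    intro x hx
    rw [hSI] at hx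
    obtain ⟨r, hr, rfl⟩ := hx
    have := hstep hr
    rw [hM] at this
    exact this
  have hM2 : M ≤ 2 * a * C := by linarith
  constructor
  · intro t ht
    have := le_trans (hFM ht) hM2
    rw [hFdef] at this
    exact this
  · intro t ht
    have h1 := hineq t ht
    have hF2 : (∫ s in Set.Ioo (0:ℝ) t, (1 + (t - s) ^ (-(1 / 2) : ℝ)) * φ s) ≤ 2 * a * C := by
      have := le_trans (hFM ht) hM2
      rw [hFdef] at this
      exact this
    have h7 : b * (∫ s in Set.Ioo (0:ℝ) t, (1 + (t - s) ^ (-(1 / 2) : ℝ)) * φ s)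
        ≤ b * (2 * a * C) := mul_le_mul_of_nonneg_left hF2 hb
    have h8 : b * (2 * a * C) = 2 * a * b * C := by ring
    linarith
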